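/- Let (Ω, ℱ, P) be a probability space, m₀ a positive integer, M : Ω → {1, …, m₀} a random variable (the cluster size), and N₁, …, N_{m₀} integrable real-valued random variables on Ω such that for every m ∈ {1, …, m₀}, E[N_m ∣ σ(M)] = E[N₁ ∣ σ(M)] almost surely (conditional exchangeability given cluster size). Then for every k ∈ {1, …, m₀}, E[∑_{m=1}^{M} N_m] = E[M · N_k]. -/
import Mathlib


open MeasureTheory

/-- For clustered data with conditionally exchangeable (given the cluster size `M`)
integrable variables `N 1, …, N m₀`, the expectation of the cluster total
`∑_{m=1}^{M} N m` equals `E[M · N k]` for every member index `k ∈ {1, …, m₀}`. -/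
theorem cluster_total_eq_size_times_member
    {Ω : Type*} [MeasurableSpace Ω] (P : Measure Ω) [IsProbabilityMeasure P]
    (m₀ : ℕ) (hm₀ : 0 < m₀)
    (M : Ω → ℕ) (hM : Measurable M)
    (hM_range : ∀ ω, M ω ∈ Finset.Icc 1 m₀)
    (N : ℕ → Ω → ℝ)
    (hN_int : ∀ m ∈ Finset.Icc 1 m₀, Integrable (N m) P)
    (h_exch : ∀ m ∈ Finset.Icc 1 m₀,
      P[N m | MeasurableSpace.comap M inferInstance]
        =ᵐ[P] P[N 1 | MeasurableSpace.comap M inferInstance]) :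
    ∀ k ∈ Finset.Icc 1 m₀,
      ∫ ω, (∑ m ∈ Finset.Icc 1 m₀, if m ≤ M ω then N m ω else 0) ∂P
        = ∫ ω, (M ω : ℝ) * N k ω ∂P := by
  intro k hk
  have h𝒢le : MeasurableSpace.comap M inferInstance ≤ ‹MeasurableSpace Ω› :=
    hM.comap_le
  have hsG : ∀ m : ℕ,
      MeasurableSet[MeasurableSpace.comap M inferInstance] {ω | m ≤ M ω} := fun m =>
    ⟨{n | m ≤ n}, measurableSet_le measurable_const measurable_id, rfl⟩
  have hs : ∀ m : ℕ, MeasurableSet {ω | m ≤ M ω} := fun m => h𝒢le _ (hsG m)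
  have e1 : ∀ (m : ℕ) (f : Ω → ℝ),
      (fun ω => if m ≤ M ω then f ω else 0) = Set.indicator {ω | m ≤ M ω} f := by
    intro m f; ext ω; simp [Set.indicator_apply, Set.mem_setOf_eq]
  have hNk := hN_int k hk
  have hint : ∀ (m : ℕ) (f : Ω → ℝ), Integrable f P →
      Integrable (fun ω => if m ≤ M ω then f ω else 0) P := by
    intro m f hf; rw [e1]; exact hf.indicator (hs m)
  have key : ∀ m ∈ Finset.Icc 1 m₀,
      ∫ ω, (if m ≤ M ω then N m ω else 0) ∂P
        = ∫ ω, (if m ≤ M ω then N k ω else 0) ∂P := by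
    intro m hm
    have hNm := hN_int m hm
    rw [e1, e1, integral_indicator (hs m), integral_indicator (hs m)]
    calc ∫ ω in {ω | m ≤ M ω}, N m ω ∂P
        = ∫ ω in {ω | m ≤ M ω}, (P[N m | MeasurableSpace.comap M inferInstance]) ω ∂P :=
          (setIntegral_condExp h𝒢le hNm (hsG m)).symm
      _ = ∫ ω in {ω | m ≤ M ω}, (P[N k | MeasurableSpace.comap M inferInstance]) ω ∂P := by
          apply integral_congr_ae
          exact ae_restrict_of_ae ((h_exch m hm).trans (h_exch k hk).symm)
      _ = ∫ ω in {ω | m ≤ M ω}, N k ω ∂P := setIntegral_condExp h𝒢le hNk (hsG m)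
  have hpt : ∀ ω, (∑ m ∈ Finset.Icc 1 m₀, if m ≤ M ω then N k ω else 0)
      = (M ω : ℝ) * N k ω := by
    intro ω
    have hMω := hM_range ω
    rw [Finset.mem_Icc] at hMω
    rw [← Finset.sum_filter]
    have hfil : (Finset.Icc 1 m₀).filter (· ≤ M ω) = Finset.Icc 1 (M ω) := by
      ext x; simp only [Finset.mem_filter, Finset.mem_Icc]; omega
    rw [hfil, Finset.sum_const, Nat.card_Icc]
    simp
  calc ∫ ω, (∑ m ∈ Finset.Icc 1 m₀, if m ≤ M ω then N m ω else 0) ∂P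
      = ∑ m ∈ Finset.Icc 1 m₀, ∫ ω, (if m ≤ M ω then N m ω else 0) ∂P :=
        integral_finset_sum _ (fun m hm => hint m _ (hN_int m hm))
    _ = ∑ m ∈ Finset.Icc 1 m₀, ∫ ω, (if m ≤ M ω then N k ω else 0) ∂P :=
        Finset.sum_congr rfl key
    _ = ∫ ω, (∑ m ∈ Finset.Icc 1 m₀, if m ≤ M ω then N k ω else 0) ∂P :=
        (integral_finset_sum _ (fun m _ => hint m _ hNk)).symm
    _ = ∫ ω, (M ω : ℝ) * N k ω ∂P := by
        apply integral_congr_ae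
        exact Filter.Eventually.of_forall hpt
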